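/- Let G be a finite bipartite graph with vertex bipartition (U, V), let w : V(G) → ℕ be a vertex weight function, and let b be a positive integer. Let W be the total weight of the b-bounded proper vertex coloring of G whose color classes are the blocks of the ordered b-partitions of U and of V. Then for every b-bounded proper vertex coloring of G whose class weights, listed in nonincreasing order, are w₁* ≥ w₂* ≥ … ≥ w_{k*}*, one has W ≤ 2·w₁* + w₂* + … + w_{k*}*. In particular, W ≤ 2·OPT, where OPT is the minimum total weight of a b-bounded proper vertex coloring of G. -/

import Mathlib

open Finset

/-- `⌈a / b⌉` for natural numbers. -/
def natCeilDiv (a b : ℕ) : ℕ := (a + b - 1) / b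

/-- `P` is the ordered `b`-partition of `S` (w.r.t. weights `w`): the blocks are pairwise
disjoint, cover `S`, each has at most `b` elements, earlier blocks consist of heavier
elements, and all blocks except possibly the last have exactly `b` elements. -/
def IsOrderedBPartition {β : Type*} [DecidableEq β] (w : β → ℕ) (b : ℕ) (S : Finset β)
    {k : ℕ} (P : Fin k → Finset β) : Prop :=
  (∀ i j : Fin k, i ≠ j → Disjoint (P i) (P j)) ∧
  Finset.univ.biUnion P = S ∧
  (∀ i, (P i).card ≤ b) ∧
  (∀ i j : Fin k, i < j → ∀ x ∈ P i, ∀ y ∈ P j, w y ≤ w x) ∧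
  (∀ i j : Fin k, i < j → (P i).card = b)

/-- A `b`-bounded proper vertex coloring of `G` with color classes `C i`:
a partition of the vertex set into independent sets, each of cardinality at most `b`. -/
def IsBddProperVC {α : Type*} (G : SimpleGraph α) (b : ℕ)
    {ι : Type*} (C : ι → Finset α) : Prop :=
  (∀ v : α, ∃! i, v ∈ C i) ∧
  (∀ i, ∀ u ∈ C i, ∀ v ∈ C i, ¬ G.Adj u v) ∧
  (∀ i, (C i).card ≤ b)

/-- A proper edge coloring of `G` with color classes `C i`: a partition of the edge set
into matchings. -/
def IsProperEC {α : Type*} [Fintype α] [DecidableEq α] (G : SimpleGraph α) [DecidableRel G.Adj]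
    {ι : Type*} (C : ι → Finset (Sym2 α)) : Prop :=
  (∀ e ∈ G.edgeFinset, ∃! i, e ∈ C i) ∧
  (∀ i, C i ⊆ G.edgeFinset) ∧
  (∀ i, ∀ e ∈ C i, ∀ f ∈ C i, e ≠ f → ¬ ∃ v, v ∈ e ∧ v ∈ f)

/-- A `b`-bounded proper edge coloring: a proper edge coloring each of whose classes has
cardinality at most `b`. -/
def IsBddProperEC {α : Type*} [Fintype α] [DecidableEq α] (G : SimpleGraph α) [DecidableRel G.Adj]
    (b : ℕ) {ι : Type*} (C : ι → Finset (Sym2 α)) : Prop :=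
  IsProperEC G C ∧ ∀ i, (C i).card ≤ b

/-- A nice `b`-bounded edge coloring: a sequence `C 0, …, C (k-1)` of (nonempty) pairwise
disjoint matchings of `G` covering `E(G)`, each of cardinality at most `b`, such that each
`C i` has cardinality exactly `b` or is a maximal matching of the subgraph of `G` with edge
set `E(G) \ (C 0 ∪ … ∪ C (i-1))`. -/
def IsNiceBddEC {α : Type*} [Fintype α] [DecidableEq α] (G : SimpleGraph α) [DecidableRel G.Adj]
    (b : ℕ) {k : ℕ} (C : Fin k → Finset (Sym2 α)) : Prop :=
  IsBddProperEC G b C ∧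
  (∀ i, (C i).Nonempty) ∧
  (∀ i : Fin k, (C i).card = b ∨
    ∀ e ∈ G.edgeFinset, (∀ j, j ≤ i → e ∉ C j) → ∃ f ∈ C i, ∃ v, v ∈ e ∧ v ∈ f)

/-- A greedy (first-fit) `b`-bounded edge coloring of `G`: a `b`-bounded proper edge coloring
`C` together with an enumeration `e` of the edges in nonincreasing order of weight and a color
assignment `c` with `e j ∈ C (c j)`, such that each edge is placed in the first color that is
not full and contains no adjacent edge at the moment of placement. -/
def IsGreedyEC {α : Type*} [Fintype α] [DecidableEq α] (G : SimpleGraph α) [DecidableRel G.Adj]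
    (w : Sym2 α → ℕ) (b : ℕ) {k m : ℕ} (C : Fin k → Finset (Sym2 α))
    (e : Fin m → Sym2 α) (c : Fin m → Fin k) : Prop :=
  IsBddProperEC G b C ∧
  Function.Injective e ∧
  (∀ f, f ∈ G.edgeFinset ↔ ∃ j, e j = f) ∧
  (∀ j j' : Fin m, j ≤ j' → w (e j') ≤ w (e j)) ∧
  (∀ j, e j ∈ C (c j)) ∧
  (∀ j : Fin m, ∀ i : Fin k, i < c j →
    ((Finset.univ.filter fun l : Fin m => l < j ∧ c l = i)).card = b ∨
      ∃ l : Fin m, l < j ∧ c l = i ∧ e l ≠ e j ∧ ∃ v, v ∈ e l ∧ v ∈ e j)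



/-- Membership in a down-set of `Fin n` from a cardinality bound. -/
lemma downset_mem {n : ℕ} (s : Finset (Fin n))
    (hdown : ∀ i j : Fin n, i ≤ j → j ∈ s → i ∈ s) (m : Fin n) (hm : (m : ℕ) < s.card) :
    m ∈ s := by
  by_contra hmem
  have hsub : s ⊆ Finset.Iio m := by
    intro i hi
    rw [Finset.mem_Iio]
    by_contra h
    exact hmem (hdown m i (not_lt.mp h) hi)
  have := Finset.card_le_card hsub
  rw [Fin.card_Iio] at this
  omega

lemma fin_card_filter_lt {n : ℕ} (j : Fin n) :
    (Finset.univ.filter fun i : Fin n => i < j).card = (j : ℕ) := by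
  have : (Finset.univ.filter fun i : Fin n => i < j) = Finset.Iio j := by
    ext i; simp
  rw [this, Fin.card_Iio]

lemma fin_card_filter_le {n : ℕ} (j : Fin n) :
    (Finset.univ.filter fun i : Fin n => i ≤ j).card = (j : ℕ) + 1 := by
  have : (Finset.univ.filter fun i : Fin n => i ≤ j) = Finset.Iic j := by
    ext i; simp
  rw [this, Fin.card_Iic]

/-- Key counting lemma: if `T` is a set of at least `m*b+1` elements, all of weight `≥ t`,
and `C` is a partition into classes of size `≤ b`, then the `(m+1)`-st largest class
weight (in the nonincreasing list `ws`) is at least `t`. -/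
lemma key_count {α : Type*} [DecidableEq α] (w : α → ℕ) (b : ℕ) (hb : 0 < b)
    {k : ℕ} (C : Fin k → Finset α) (ws : Fin k → ℕ)
    (hCpart : ∀ v : α, ∃! i, v ∈ C i) (hCb : ∀ i, (C i).card ≤ b)
    (σ : Equiv.Perm (Fin k)) (hws : ∀ i, ws i = (C (σ i)).sup w)
    (hmono : ∀ i j : Fin k, i ≤ j → ws j ≤ ws i)
    (T : Finset α) (t m : ℕ) (hcard : m * b + 1 ≤ T.card)
    (hwt : ∀ y ∈ T, t ≤ w y) :
    ∃ hm : m < k, t ≤ ws ⟨m, hm⟩ := by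
  classical
  set I : Finset (Fin k) := Finset.univ.filter (fun i => ∃ y ∈ T, y ∈ C i) with hI
  have hTsub : T ⊆ I.biUnion C := by
    intro y hy
    obtain ⟨i, hi, -⟩ := hCpart y
    refine Finset.mem_biUnion.mpr ⟨i, ?_, hi⟩
    simp only [hI, Finset.mem_filter, Finset.mem_univ, true_and]
    exact ⟨y, hy, hi⟩
  have h1 : T.card ≤ I.card * b := by
    calc T.card ≤ (I.biUnion C).card := Finset.card_le_card hTsub
      _ ≤ ∑ i ∈ I, (C i).card := Finset.card_biUnion_le
      _ ≤ ∑ _i ∈ I, b := Finset.sum_le_sum (fun i _ => hCb i)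
      _ = I.card * b := by rw [Finset.sum_const, smul_eq_mul]
  have hmI : m < I.card := by
    by_contra h
    push_neg at h
    have : I.card * b ≤ m * b := Nat.mul_le_mul_right b h
    omega
  set J : Finset (Fin k) := Finset.univ.filter (fun i => t ≤ ws i) with hJ
  have hIJ : I.card ≤ J.card := by
    apply Finset.card_le_card_of_injOn (fun i => σ.symm i)
    · intro i hi
      simp only [hI, Finset.coe_filter, Finset.mem_univ, true_and, Set.mem_setOf_eq] at hi
      obtain ⟨y, hy, hyi⟩ := hi
      simp only [hJ, Finset.coe_filter, Finset.mem_univ, true_and, Set.mem_setOf_eq]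
      rw [hws, Equiv.apply_symm_apply]
      exact le_trans (hwt y hy) (Finset.le_sup hyi)
    · intro x _ y _ h
      exact σ.symm.injective h
  have hmk : m < k := by
    have := Finset.card_le_univ J
    simp only [Finset.card_univ, Fintype.card_fin] at this
    omega
  refine ⟨hmk, ?_⟩
  have hmem : (⟨m, hmk⟩ : Fin k) ∈ J := by
    apply downset_mem J
    · intro i j hij hjmem
      simp only [hJ, Finset.mem_filter, Finset.mem_univ, true_and] at hjmem ⊢
      exact le_trans hjmem (hmono i j hij)
    · simpa using lt_of_lt_of_le hmI hIJ
  simpa [hJ] using hmem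



lemma obp_sup_antitone {α : Type*} [DecidableEq α] {w : α → ℕ} {b : ℕ} (hb : 0 < b)
    {S : Finset α} {p : ℕ} {P : Fin p → Finset α} (hP : IsOrderedBPartition w b S P)
    {i j : Fin p} (hij : i ≤ j) : (P j).sup w ≤ (P i).sup w := by
  rcases eq_or_lt_of_le hij with rfl | hlt
  · exact le_rfl
  · have hcard : (P i).card = b := hP.2.2.2.2 i j hlt
    have hne : (P i).Nonempty := Finset.card_pos.mp (by omega)
    obtain ⟨x, hx⟩ := hne
    exact Finset.sup_le fun y hy =>
      le_trans (hP.2.2.2.1 i j hlt x hx y hy) (Finset.le_sup hx)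

lemma obp_buildT {α : Type*} [DecidableEq α] {w : α → ℕ} {b : ℕ}
    {S : Finset α} {p : ℕ} {P : Fin p → Finset α} (hP : IsOrderedBPartition w b S P)
    (j : Fin p) (hne : (P j).Nonempty) :
    ∃ T : Finset α, T ⊆ S ∧ (j : ℕ) * b + 1 ≤ T.card ∧ ∀ y ∈ T, (P j).sup w ≤ w y := by
  obtain ⟨hdisj, hcover, hcard, horder, hfull⟩ := hP
  obtain ⟨x, hx, hxsup⟩ := Finset.exists_mem_eq_sup _ hne w
  refine ⟨insert x ((Finset.univ.filter (fun i : Fin p => i < j)).biUnion P), ?_, ?_, ?_⟩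
  · intro y hy
    rcases Finset.mem_insert.mp hy with rfl | hy
    · rw [← hcover]; exact Finset.mem_biUnion.mpr ⟨j, Finset.mem_univ _, hx⟩
    · obtain ⟨i, -, hyi⟩ := Finset.mem_biUnion.mp hy
      rw [← hcover]; exact Finset.mem_biUnion.mpr ⟨i, Finset.mem_univ _, hyi⟩
  · have hxnot : x ∉ (Finset.univ.filter (fun i : Fin p => i < j)).biUnion P := by
      intro hmem
      obtain ⟨i, hi, hxi⟩ := Finset.mem_biUnion.mp hmem
      simp only [Finset.mem_filter, Finset.mem_univ, true_and] at hi
      exact (Finset.disjoint_left.mp (hdisj i j (ne_of_lt hi)) hxi) hx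
    rw [Finset.card_insert_of_notMem hxnot,
      Finset.card_biUnion (fun i hi l hl hil => hdisj i l hil)]
    have : ∀ i ∈ Finset.univ.filter (fun i : Fin p => i < j), (P i).card = b := by
      intro i hi
      simp only [Finset.mem_filter, Finset.mem_univ, true_and] at hi
      exact hfull i j hi
    rw [Finset.sum_congr rfl this, Finset.sum_const, smul_eq_mul, fin_card_filter_lt]
  · intro y hy
    rcases Finset.mem_insert.mp hy with rfl | hy
    · rw [hxsup]
    · obtain ⟨i, hi, hyi⟩ := Finset.mem_biUnion.mp hy
      simp only [Finset.mem_filter, Finset.mem_univ, true_and] at hi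
      rw [hxsup]
      exact horder i j hi y hyi x hx

lemma part1 {α : Type*} [DecidableEq α] (w : α → ℕ)
    (U V : Finset α) (hUV : Disjoint U V)
    (b : ℕ) (hb : 0 < b)
    {p q : ℕ} (PU : Fin p → Finset α) (PV : Fin q → Finset α)
    (hPU : IsOrderedBPartition w b U PU) (hPV : IsOrderedBPartition w b V PV)
    {k : ℕ} (C : Fin k → Finset α) (ws : Fin k → ℕ)
    (hCpart : ∀ v : α, ∃! i, v ∈ C i) (hCb : ∀ i, (C i).card ≤ b)
    (σ : Equiv.Perm (Fin k)) (hws : ∀ i, ws i = (C (σ i)).sup w)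
    (hmono : ∀ i j : Fin k, i ≤ j → ws j ≤ ws i) :
    (∑ j : Fin p, (PU j).sup w) + (∑ j : Fin q, (PV j).sup w)
      ≤ (∑ i, ws i) + Finset.univ.sup ws := by
  classical
  set a : Fin p → ℕ := fun j => (PU j).sup w with ha
  set B : Fin q → ℕ := fun j => (PV j).sup w with hB
  set ws' : ℕ → ℕ := fun m => if h : m < k then ws ⟨m, h⟩ else 0 with hws'
  set bnd : ℕ → ℕ := fun m => if m = 0 then Finset.univ.sup ws else ws' (m - 1) with hbnd
  have hws'anti : ∀ m m' : ℕ, m ≤ m' → ws' m' ≤ ws' m := by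
    intro m m' h
    by_cases h' : m' < k
    · have hm : m < k := lt_of_le_of_lt h h'
      simp only [hws', dif_pos h', dif_pos hm]
      exact hmono ⟨m, hm⟩ ⟨m', h'⟩ h
    · simp only [hws', dif_neg h']
      exact Nat.zero_le _
  have hws'bnd : ∀ m, ws' m ≤ bnd m := by
    intro m
    rcases Nat.eq_zero_or_pos m with rfl | hm
    · simp only [hbnd, if_pos rfl]
      by_cases h0 : 0 < k
      · simp only [hws', dif_pos h0]
        exact Finset.le_sup (Finset.mem_univ _)
      · simp only [hws', dif_neg h0]
        exact Nat.zero_le _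
    · simp only [hbnd, if_neg (by omega : ¬ m = 0)]
      exact hws'anti (m - 1) m (by omega)
  have haanti : ∀ i j : Fin p, i ≤ j → a j ≤ a i := fun i j h => obp_sup_antitone hb hPU h
  have hBanti : ∀ i j : Fin q, i ≤ j → B j ≤ B i := fun i j h => obp_sup_antitone hb hPV h
  set ta : Fin p → ℕ := fun j => (Finset.univ.filter fun j' : Fin q => a j < B j').card with hta
  set tb : Fin q → ℕ := fun j' => (Finset.univ.filter fun i : Fin p => B j' ≤ a i).card with htb
  have htaq : ∀ j, ta j ≤ q := by
    intro j
    calc ta j ≤ (Finset.univ : Finset (Fin q)).card := Finset.card_le_card (Finset.filter_subset _ _)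
      _ = q := by simp
  have htbp : ∀ j', tb j' ≤ p := by
    intro j'
    calc tb j' ≤ (Finset.univ : Finset (Fin p)).card := Finset.card_le_card (Finset.filter_subset _ _)
      _ = p := by simp
  -- claim A
  have claimA : ∀ j : Fin p, a j ≤ bnd ((j : ℕ) + ta j) := by
    intro j
    rcases Nat.eq_zero_or_pos (a j) with hz | hz
    · rw [hz]; exact Nat.zero_le _
    have hne : (PU j).Nonempty := by
      rw [Finset.nonempty_iff_ne_empty]
      intro he
      simp [ha, he] at hz
    obtain ⟨TU, hTUsub, hTUcard, hTUw⟩ := obp_buildT hPU j hne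
    rcases Nat.eq_zero_or_pos (ta j) with h0 | hpos
    · obtain ⟨hm, hle⟩ := key_count w b hb C ws hCpart hCb σ hws hmono TU (a j) j hTUcard hTUw
      rw [h0, Nat.add_zero]
      calc a j ≤ ws' (j : ℕ) := by simp only [hws']; rw [dif_pos hm]; exact hle
        _ ≤ bnd (j : ℕ) := hws'bnd _
    · have htq : ta j ≤ q := htaq j
      set j0 : Fin q := ⟨ta j - 1, by omega⟩ with hj0
      have hj0mem : j0 ∈ Finset.univ.filter fun j' : Fin q => a j < B j' := by
        apply downset_mem
        · intro i jj hij hjj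
          simp only [Finset.mem_filter, Finset.mem_univ, true_and] at hjj ⊢
          exact lt_of_lt_of_le hjj (hBanti i jj hij)
        · show ta j - 1 < ta j
          omega
      simp only [Finset.mem_filter, Finset.mem_univ, true_and] at hj0mem
      have hne' : (PV j0).Nonempty := by
        rw [Finset.nonempty_iff_ne_empty]
        intro he
        simp [hB, he] at hj0mem
      obtain ⟨TV, hTVsub, hTVcard, hTVw⟩ := obp_buildT hPV j0 hne'
      have hdisjT : Disjoint TU TV := Finset.disjoint_of_subset_left hTUsub
        (Finset.disjoint_of_subset_right hTVsub hUV)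
      have hTVcard' : (ta j - 1) * b + 1 ≤ TV.card := hTVcard
      have hcardT : ((j : ℕ) + (ta j - 1)) * b + 1 ≤ (TU ∪ TV).card := by
        rw [Finset.card_union_of_disjoint hdisjT, Nat.add_mul]
        omega
      have hwT : ∀ y ∈ TU ∪ TV, a j ≤ w y := by
        intro y hy
        rcases Finset.mem_union.mp hy with hy | hy
        · exact hTUw y hy
        · exact le_trans (le_of_lt hj0mem) (hTVw y hy)
      obtain ⟨hm, hle⟩ := key_count w b hb C ws hCpart hCb σ hws hmono (TU ∪ TV) (a j)
        ((j : ℕ) + (ta j - 1)) hcardT hwT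
      have heq : bnd ((j : ℕ) + ta j) = ws' ((j : ℕ) + (ta j - 1)) := by
        simp only [hbnd]
        simp only [if_neg (by omega : ¬ (j : ℕ) + ta j = 0)]
        congr 1
        omega
      rw [heq]
      simp only [hws']
      rw [dif_pos hm]
      exact hle
  -- claim B
  have claimB : ∀ j' : Fin q, B j' ≤ bnd ((j' : ℕ) + tb j') := by
    intro j'
    rcases Nat.eq_zero_or_pos (B j') with hz | hz
    · rw [hz]; exact Nat.zero_le _
    have hne : (PV j').Nonempty := by
      rw [Finset.nonempty_iff_ne_empty]
      intro he
      simp [hB, he] at hz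
    obtain ⟨TV, hTVsub, hTVcard, hTVw⟩ := obp_buildT hPV j' hne
    rcases Nat.eq_zero_or_pos (tb j') with h0 | hpos
    · obtain ⟨hm, hle⟩ := key_count w b hb C ws hCpart hCb σ hws hmono TV (B j') j' hTVcard hTVw
      rw [h0, Nat.add_zero]
      calc B j' ≤ ws' (j' : ℕ) := by simp only [hws']; rw [dif_pos hm]; exact hle
        _ ≤ bnd (j' : ℕ) := hws'bnd _
    · have htp : tb j' ≤ p := htbp j'
      set i0 : Fin p := ⟨tb j' - 1, by omega⟩ with hi0
      have hi0mem : i0 ∈ Finset.univ.filter fun i : Fin p => B j' ≤ a i := by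
        apply downset_mem
        · intro i jj hij hjj
          simp only [Finset.mem_filter, Finset.mem_univ, true_and] at hjj ⊢
          exact le_trans hjj (haanti i jj hij)
        · show tb j' - 1 < tb j'
          omega
      simp only [Finset.mem_filter, Finset.mem_univ, true_and] at hi0mem
      have hne' : (PU i0).Nonempty := by
        rw [Finset.nonempty_iff_ne_empty]
        intro he
        simp only [ha, he, Finset.sup_empty, Nat.bot_eq_zero] at hi0mem
        omega
      obtain ⟨TU, hTUsub, hTUcard, hTUw⟩ := obp_buildT hPU i0 hne'
      have hdisjT : Disjoint TU TV := Finset.disjoint_of_subset_left hTUsub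
        (Finset.disjoint_of_subset_right hTVsub hUV)
      have hTUcard' : (tb j' - 1) * b + 1 ≤ TU.card := hTUcard
      have hcardT : ((j' : ℕ) + (tb j' - 1)) * b + 1 ≤ (TU ∪ TV).card := by
        rw [Finset.card_union_of_disjoint hdisjT, Nat.add_mul]
        omega
      have hwT : ∀ y ∈ TU ∪ TV, B j' ≤ w y := by
        intro y hy
        rcases Finset.mem_union.mp hy with hy | hy
        · exact le_trans hi0mem (hTUw y hy)
        · exact hTVw y hy
      obtain ⟨hm, hle⟩ := key_count w b hb C ws hCpart hCb σ hws hmono (TU ∪ TV) (B j')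
        ((j' : ℕ) + (tb j' - 1)) hcardT hwT
      have heq : bnd ((j' : ℕ) + tb j') = ws' ((j' : ℕ) + (tb j' - 1)) := by
        simp only [hbnd]
        simp only [if_neg (by omega : ¬ (j' : ℕ) + tb j' = 0)]
        congr 1
        omega
      rw [heq]
      simp only [hws']
      rw [dif_pos hm]
      exact hle
  -- monotonicity of ta, tb
  have htamono : ∀ i j : Fin p, i ≤ j → ta i ≤ ta j := by
    intro i j h
    apply Finset.card_le_card
    intro x hx
    simp only [Finset.mem_filter, Finset.mem_univ, true_and] at hx ⊢
    exact lt_of_le_of_lt (haanti i j h) hx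
  have htbmono : ∀ i j : Fin q, i ≤ j → tb i ≤ tb j := by
    intro i j h
    apply Finset.card_le_card
    intro x hx
    simp only [Finset.mem_filter, Finset.mem_univ, true_and] at hx ⊢
    exact le_trans (hBanti i j h) hx
  -- cross bounds
  have cross1 : ∀ (j : Fin p) (j' : Fin q), B j' ≤ a j →
      (j : ℕ) + 1 ≤ tb j' ∧ ta j ≤ (j' : ℕ) := by
    intro j j' hle
    constructor
    · have hsub : (Finset.univ.filter fun i : Fin p => i ≤ j)
          ⊆ Finset.univ.filter fun i : Fin p => B j' ≤ a i := by
        intro i hi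
        simp only [Finset.mem_filter, Finset.mem_univ, true_and] at hi ⊢
        exact le_trans hle (haanti i j hi)
      have := Finset.card_le_card hsub
      rw [fin_card_filter_le] at this
      exact this
    · have hsub : (Finset.univ.filter fun j'' : Fin q => a j < B j'')
          ⊆ Finset.univ.filter fun j'' : Fin q => j'' < j' := by
        intro j'' hj''
        simp only [Finset.mem_filter, Finset.mem_univ, true_and] at hj'' ⊢
        by_contra hc
        push_neg at hc
        exact absurd (lt_of_lt_of_le hj'' (le_trans (hBanti j' j'' hc) hle)) (lt_irrefl _)
      have := Finset.card_le_card hsub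
      rw [fin_card_filter_lt] at this
      exact this
  have cross2 : ∀ (j : Fin p) (j' : Fin q), a j < B j' →
      (j' : ℕ) + 1 ≤ ta j ∧ tb j' ≤ (j : ℕ) := by
    intro j j' hlt
    constructor
    · have hsub : (Finset.univ.filter fun i : Fin q => i ≤ j')
          ⊆ Finset.univ.filter fun j'' : Fin q => a j < B j'' := by
        intro i hi
        simp only [Finset.mem_filter, Finset.mem_univ, true_and] at hi ⊢
        exact lt_of_lt_of_le hlt (hBanti i j' hi)
      have := Finset.card_le_card hsub
      rw [fin_card_filter_le] at this
      exact this
    · have hsub : (Finset.univ.filter fun i : Fin p => B j' ≤ a i)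
          ⊆ Finset.univ.filter fun i : Fin p => i < j := by
        intro i hi
        simp only [Finset.mem_filter, Finset.mem_univ, true_and] at hi ⊢
        by_contra hc
        push_neg at hc
        exact absurd (lt_of_le_of_lt (le_trans hi (haanti j i hc)) hlt) (lt_irrefl _)
      have := Finset.card_le_card hsub
      rw [fin_card_filter_lt] at this
      exact this
  -- position function
  set pos : Fin p ⊕ Fin q → ℕ :=
    Sum.elim (fun j => (j : ℕ) + ta j) (fun j' => (j' : ℕ) + tb j') with hpos
  have hinj : Set.InjOn pos (Finset.univ : Finset (Fin p ⊕ Fin q)) := by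
    rintro (j1 | j1) - (j2 | j2) - h
    · simp only [hpos, Sum.elim_inl] at h
      rcases lt_trichotomy j1 j2 with hlt | heq | hlt
      · have := htamono j1 j2 (le_of_lt hlt)
        have : (j1 : ℕ) < (j2 : ℕ) := hlt
        omega
      · rw [heq]
      · have := htamono j2 j1 (le_of_lt hlt)
        have : (j2 : ℕ) < (j1 : ℕ) := hlt
        omega
    · simp only [hpos, Sum.elim_inl, Sum.elim_inr] at h
      exfalso
      rcases le_or_gt (B j2) (a j1) with hc | hc
      · obtain ⟨h1, h2⟩ := cross1 j1 j2 hc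
        omega
      · obtain ⟨h1, h2⟩ := cross2 j1 j2 hc
        omega
    · simp only [hpos, Sum.elim_inl, Sum.elim_inr] at h
      exfalso
      rcases le_or_gt (B j1) (a j2) with hc | hc
      · obtain ⟨h1, h2⟩ := cross1 j2 j1 hc
        omega
      · obtain ⟨h1, h2⟩ := cross2 j2 j1 hc
        omega
    · simp only [hpos, Sum.elim_inr] at h
      rcases lt_trichotomy j1 j2 with hlt | heq | hlt
      · have := htbmono j1 j2 (le_of_lt hlt)
        have : (j1 : ℕ) < (j2 : ℕ) := hlt
        omega
      · rw [heq]
      · have := htbmono j2 j1 (le_of_lt hlt)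
        have : (j2 : ℕ) < (j1 : ℕ) := hlt
        omega
  have hposlt : ∀ x : Fin p ⊕ Fin q, pos x < p + q := by
    rintro (j | j')
    · simp only [hpos, Sum.elim_inl]
      have := htaq j
      have := j.isLt
      omega
    · simp only [hpos, Sum.elim_inr]
      have := htbp j'
      have := j'.isLt
      omega
  have hvalbnd : ∀ x : Fin p ⊕ Fin q, Sum.elim a B x ≤ bnd (pos x) := by
    rintro (j | j')
    · exact claimA j
    · exact claimB j'
  have hws'sum : ∀ n : ℕ, ∑ m ∈ Finset.range n, ws' m ≤ ∑ i, ws i := by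
    intro n
    have h1 : ∑ m ∈ Finset.range n, ws' m ≤ ∑ m ∈ Finset.range (k + n), ws' m :=
      Finset.sum_le_sum_of_subset (Finset.range_subset_range.mpr (by omega))
    have h2 : ∀ n' : ℕ, ∑ m ∈ Finset.range (k + n'), ws' m = ∑ m ∈ Finset.range k, ws' m := by
      intro n'
      induction n' with
      | zero => rfl
      | succ n' ih =>
        rw [← Nat.add_assoc, Finset.sum_range_succ, ih]
        have : ws' (k + n') = 0 := by
          simp only [hws']
          rw [dif_neg (by omega : ¬ k + n' < k)]
        rw [this, Nat.add_zero]
    have h3 : ∑ m ∈ Finset.range k, ws' m = ∑ i, ws i := by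
      rw [← Fin.sum_univ_eq_sum_range]
      apply Finset.sum_congr rfl
      intro i _
      simp only [hws']
      rw [dif_pos i.isLt]
    rw [h2 n] at h1
    rw [h3] at h1
    exact h1
  calc (∑ j : Fin p, (PU j).sup w) + (∑ j : Fin q, (PV j).sup w)
      = ∑ x : Fin p ⊕ Fin q, Sum.elim a B x := by
        rw [Fintype.sum_sum_type]
        simp [ha, hB]
    _ ≤ ∑ x : Fin p ⊕ Fin q, bnd (pos x) := Finset.sum_le_sum (fun x _ => hvalbnd x)
    _ = ∑ m ∈ Finset.univ.image pos, bnd m := (Finset.sum_image (fun x hx y hy h =>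
        hinj (by simpa using hx) (by simpa using hy) h)).symm
    _ ≤ ∑ m ∈ Finset.range (p + q), bnd m := Finset.sum_le_sum_of_subset (by
        intro m hm
        obtain ⟨x, -, rfl⟩ := Finset.mem_image.mp hm
        exact Finset.mem_range.mpr (hposlt x))
    _ ≤ (∑ i, ws i) + Finset.univ.sup ws := by
        rcases Nat.eq_zero_or_pos (p + q) with h0 | h0
        · rw [h0]
          simp
        · obtain ⟨n, hn⟩ : ∃ n, p + q = n + 1 := ⟨p + q - 1, by omega⟩
          rw [hn, Finset.sum_range_succ']
          have hb0 : bnd 0 = Finset.univ.sup ws := by simp [hbnd]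
          have hbs : ∀ m, bnd (m + 1) = ws' m := by
            intro m
            simp only [hbnd]
            rw [if_neg (by omega : ¬ m + 1 = 0)]
            congr 1
          have : ∑ m ∈ Finset.range n, bnd (m + 1) = ∑ m ∈ Finset.range n, ws' m :=
            Finset.sum_congr rfl fun m _ => hbs m
          rw [this, hb0]
          exact Nat.add_le_add (hws'sum n) le_rfl

theorem stmt_1 {α : Type*} [Fintype α] [DecidableEq α] (G : SimpleGraph α)
    (w : α → ℕ)
    (U V : Finset α) (hdisj : Disjoint U V) (hcover : U ∪ V = Finset.univ)
    (hbip : ∀ u v : α, G.Adj u v → (u ∈ U ∧ v ∈ V) ∨ (u ∈ V ∧ v ∈ U))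
    (b : ℕ) (hb : 0 < b)
    (PU : Fin (natCeilDiv U.card b) → Finset α)
    (PV : Fin (natCeilDiv V.card b) → Finset α)
    (hPU : IsOrderedBPartition w b U PU)
    (hPV : IsOrderedBPartition w b V PV) :
    (∀ (k : ℕ) (C : Fin k → Finset α) (ws : Fin k → ℕ), IsBddProperVC G b C →
      (∃ σ : Equiv.Perm (Fin k), ∀ i, ws i = (C (σ i)).sup w) →
      (∀ i j : Fin k, i ≤ j → ws j ≤ ws i) →
      ∑ i, (Fin.append PU PV i).sup w ≤ (∑ i, ws i) + Finset.univ.sup ws) ∧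
    (∀ (k : ℕ) (C : Fin k → Finset α), IsBddProperVC G b C →
      ∑ i, (Fin.append PU PV i).sup w ≤ 2 * ∑ i, (C i).sup w) := by
  classical
  have hsum : ∑ i, (Fin.append PU PV i).sup w
      = (∑ j, (PU j).sup w) + (∑ j, (PV j).sup w) := by
    rw [Fin.sum_univ_add]
    congr 1
    · exact Finset.sum_congr rfl fun i _ => by rw [Fin.append_left]
    · exact Finset.sum_congr rfl fun i _ => by rw [Fin.append_right]
  have hpart1 : ∀ (k : ℕ) (C : Fin k → Finset α) (ws : Fin k → ℕ), IsBddProperVC G b C →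
      (∃ σ : Equiv.Perm (Fin k), ∀ i, ws i = (C (σ i)).sup w) →
      (∀ i j : Fin k, i ≤ j → ws j ≤ ws i) →
      ∑ i, (Fin.append PU PV i).sup w ≤ (∑ i, ws i) + Finset.univ.sup ws := by
    intro k C ws hC hex hmono
    obtain ⟨σ, hσ⟩ := hex
    rw [hsum]
    exact part1 w U V hdisj b hb PU PV hPU hPV C ws hC.1 hC.2.2 σ hσ hmono
  refine ⟨hpart1, ?_⟩
  intro k C hC
  set f : Fin k → ℕ := fun i => (C i).sup w with hf
  set σ : Equiv.Perm (Fin k) := (Fin.revPerm).trans (Tuple.sort f) with hσdef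
  set ws : Fin k → ℕ := fun i => f (σ i) with hwsdef
  have hmono : ∀ i j : Fin k, i ≤ j → ws j ≤ ws i := by
    intro i j hij
    simp only [hwsdef, hσdef, Equiv.trans_apply, Fin.revPerm_apply]
    exact Tuple.monotone_sort f (Fin.rev_le_rev.mpr hij)
  have hsumws : ∑ i, ws i = ∑ i, f i := by
    simp only [hwsdef]
    exact Equiv.sum_comp σ f
  have hsupws : Finset.univ.sup ws = Finset.univ.sup f := by
    apply le_antisymm
    · apply Finset.sup_le
      intro i _
      exact Finset.le_sup (f := f) (Finset.mem_univ (σ i))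
    · apply Finset.sup_le
      intro i _
      have h := Finset.le_sup (f := ws) (Finset.mem_univ (σ.symm i))
      have : ws (σ.symm i) = f i := by
        simp only [hwsdef, Equiv.apply_symm_apply]
      rwa [this] at h
  have hsupsum : Finset.univ.sup f ≤ ∑ i, f i := by
    apply Finset.sup_le
    intro i _
    exact Finset.single_le_sum (fun _ _ => Nat.zero_le _) (Finset.mem_univ i)
  have := hpart1 k C ws hC ⟨σ, fun i => rfl⟩ hmono
  rw [hsumws, hsupws] at this
  calc ∑ i, (Fin.append PU PV i).sup w ≤ (∑ i, f i) + Finset.univ.sup f := this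
    _ ≤ (∑ i, f i) + ∑ i, f i := Nat.add_le_add le_rfl hsupsum
    _ = 2 * ∑ i, (C i).sup w := by rw [Nat.two_mul]
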